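/- Let P, σ_W², σ_V² > 0 and suppose h_Y ≤ (n/2)·log₂(2πe(σ_W² + P)) and h_Z ≥ (n/2)·log₂(2^{(2/n)h_Y} + 2πe·σ_V²). Then h_Y − h_Z ≤ (n/2)·log₂((σ_W² + P)/(σ_W² + σ_V² + P)). -/

import Mathlib

open Real

/-- Core inequality of Lemma 1: if `h_Y ≤ (n/2)·log₂(2πe(σ_W² + P))` and
`h_Z ≥ (n/2)·log₂(2^{(2/n)h_Y} + 2πe·σ_V²)`, then
`h_Y − h_Z ≤ (n/2)·log₂((σ_W² + P)/(σ_W² + σ_V² + P))`. -/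
theorem entropy_difference_bound (n : ℝ) (hn : 0 < n)
    (P σW2 σV2 hY hZ : ℝ) (hP : 0 < P) (hW : 0 < σW2) (hV : 0 < σV2)
    (hhY : hY ≤ (n / 2) * logb 2 (2 * π * exp 1 * (σW2 + P)))
    (hhZ : (n / 2) * logb 2 ((2 : ℝ) ^ ((2 / n) * hY) + 2 * π * exp 1 * σV2) ≤ hZ) :
    hY - hZ ≤ (n / 2) * logb 2 ((σW2 + P) / (σW2 + σV2 + P)) := by
  have hπ : (0:ℝ) < π := pi_pos
  have he : (0:ℝ) < exp 1 := exp_pos 1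
  set c := 2 * π * exp 1 * σV2 with hc
  set A := 2 * π * exp 1 * (σW2 + P) with hA
  have hcpos : 0 < c := by positivity
  have hApos : 0 < A := by positivity
  set x := (2 / n) * hY with hx
  have hxlog : x ≤ logb 2 A := by
    have h1 : (2 / n) * hY ≤ (2 / n) * ((n / 2) * logb 2 A) :=
      mul_le_mul_of_nonneg_left hhY (by positivity)
    have h2 : (2 / n) * ((n / 2) * logb 2 A) = logb 2 A := by
      field_simp
    rw [hx]; linarith [h1, h2.le, h2.ge]
  have hxle : (2:ℝ) ^ x ≤ A := by
    calc (2:ℝ) ^ x ≤ (2:ℝ) ^ (logb 2 A) :=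
          rpow_le_rpow_of_exponent_le one_le_two hxlog
      _ = A := rpow_logb two_pos (by norm_num) hApos
  have hpx : (0:ℝ) < (2:ℝ) ^ x := rpow_pos_of_pos two_pos x
  have key : x - logb 2 ((2:ℝ) ^ x + c) ≤ logb 2 (A / (A + c)) := by
    have h1 : x - logb 2 ((2:ℝ) ^ x + c) = logb 2 ((2:ℝ) ^ x / ((2:ℝ) ^ x + c)) := by
      rw [logb_div (by positivity) (by positivity), logb_rpow two_pos (by norm_num)]
    rw [h1]
    apply logb_le_logb_of_le one_lt_two (by positivity)
    rw [div_le_div_iff₀ (by positivity) (by positivity)]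
    nlinarith [mul_le_mul_of_nonneg_right hxle hcpos.le]
  have hAc : A / (A + c) = (σW2 + P) / (σW2 + σV2 + P) := by
    rw [hA, hc]
    rw [div_eq_div_iff (by positivity) (by positivity)]
    ring
  have hYx : hY = (n / 2) * x := by rw [hx]; field_simp
  calc hY - hZ ≤ hY - (n / 2) * logb 2 ((2:ℝ) ^ x + c) := by linarith
    _ = (n / 2) * (x - logb 2 ((2:ℝ) ^ x + c)) := by rw [hYx]; ring
    _ ≤ (n / 2) * logb 2 (A / (A + c)) :=
        mul_le_mul_of_nonneg_left key (by positivity)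
    _ = (n / 2) * logb 2 ((σW2 + P) / (σW2 + σV2 + P)) := by rw [hAc]
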